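/- If v and w are distinct 0-1 words of length n, then the freedom matroids M_v and M_w are not isomorphic; consequently, there are exactly 2^n pairwise nonisomorphic freedom matroids on an n-element set. -/

import Mathlib

open Matroid Set

/-- The set of positions of the ones of a 0-1 word of length `n`. -/
def ones {n : ℕ} (v : Fin n → Bool) : Finset (Fin n) :=
  Finset.univ.filter (fun i => v i = true)

/-- The flag on `Fin n` determined by a word `w` with `r` ones: `T_r` is everything,
and `T_{k-1} = { s : s < e_{π_k(w)} }` for `1 ≤ k ≤ r`. -/
def flagOfWord {n : ℕ} (w : Fin n → Bool) (i : ℕ) : Set (Fin n) :=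
  if h : i < (ones w).card
    then {s : Fin n | s < (ones w).orderEmbOfFin rfl ⟨i, h⟩} else Set.univ

lemma ncard_lt_set {n : ℕ} (c : Fin n) : ({s : Fin n | s < c} : Set (Fin n)).ncard = c := by
  rw [show {s : Fin n | s < c} = ↑(Finset.Iio c) by ext; simp, Set.ncard_coe_finset,
    Fin.card_Iio]

lemma flag_eq {n : ℕ} (w : Fin n → Bool) (i : ℕ) (h : i < (ones w).card) :
    flagOfWord w i = {s : Fin n | s < (ones w).orderEmbOfFin rfl ⟨i, h⟩} := by
  simp [flagOfWord, h]

/-- If `X` has more than `π_k` elements then it contains an independent set of size `k+1`. -/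
lemma exists_indep_subset {n : ℕ} (w : Fin n → Bool) (M : Matroid (Fin n))
    (hI : ∀ I : Set (Fin n),
      M.Indep I ↔ ∀ i ≤ (ones w).card, (I ∩ flagOfWord w i).ncard ≤ i) :
    ∀ k, ∀ hk : k < (ones w).card, ∀ X : Set (Fin n),
      (((ones w).orderEmbOfFin rfl ⟨k, hk⟩ : Fin n) : ℕ) < X.ncard →
      ∃ I ⊆ X, I.ncard = k + 1 ∧ M.Indep I := by
  intro k
  induction k with
  | zero =>
    intro hk X hX
    have hfin : X.Finite := X.toFinite
    have hne : X.Nonempty := by rw [← Set.ncard_pos hfin]; omega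
    obtain ⟨x, hxX, hmax⟩ := Set.exists_max_image X id hfin hne
    have hxnot : ¬ x < (ones w).orderEmbOfFin rfl ⟨0, hk⟩ := by
      intro hlt
      have hsub : X ⊆ {s : Fin n | s < (ones w).orderEmbOfFin rfl ⟨0, hk⟩} :=
        fun y hy => lt_of_le_of_lt (hmax y hy) hlt
      have := Set.ncard_le_ncard hsub (Set.toFinite _)
      rw [ncard_lt_set] at this; omega
    refine ⟨{x}, by simpa using hxX, by simp, ?_⟩
    rw [hI]
    intro i hi
    rcases Nat.eq_zero_or_pos i with h0 | h1
    · subst h0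
      have hempty : ({x} : Set (Fin n)) ∩ flagOfWord w 0 = ∅ := by
        rw [flag_eq w 0 hk]
        ext y
        simp only [Set.mem_inter_iff, Set.mem_singleton_iff, Set.mem_setOf_eq,
          Set.mem_empty_iff_false, iff_false, not_and]
        rintro rfl; exact hxnot
      simp [hempty]
    · calc (({x} : Set (Fin n)) ∩ flagOfWord w i).ncard
          ≤ ({x} : Set (Fin n)).ncard := Set.ncard_inter_le_ncard_left _ _
        _ = 1 := Set.ncard_singleton x
        _ ≤ i := h1
  | succ k ih =>
    intro hk X hX
    have hk' : k < (ones w).card := Nat.lt_of_succ_lt hk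
    have hmono : (((ones w).orderEmbOfFin rfl ⟨k, hk'⟩ : Fin n) : ℕ)
        < (((ones w).orderEmbOfFin rfl ⟨k + 1, hk⟩ : Fin n) : ℕ) :=
      ((ones w).orderEmbOfFin rfl).strictMono (show (⟨k, hk'⟩ : Fin _) < ⟨k + 1, hk⟩ by
        simp [Fin.lt_def])
    have hfin : X.Finite := X.toFinite
    have hne : X.Nonempty := by rw [← Set.ncard_pos hfin]; omega
    obtain ⟨x, hxX, hmax⟩ := Set.exists_max_image X id hfin hne
    have hxnot : ¬ x < (ones w).orderEmbOfFin rfl ⟨k + 1, hk⟩ := by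
      intro hlt
      have hsub : X ⊆ {s : Fin n | s < (ones w).orderEmbOfFin rfl ⟨k + 1, hk⟩} :=
        fun y hy => lt_of_le_of_lt (hmax y hy) hlt
      have := Set.ncard_le_ncard hsub (Set.toFinite _)
      rw [ncard_lt_set] at this; omega
    have hX' : (((ones w).orderEmbOfFin rfl ⟨k, hk'⟩ : Fin n) : ℕ) < (X \ {x}).ncard := by
      rw [Set.ncard_diff_singleton_of_mem hxX]; omega
    obtain ⟨I', hI'X, hI'card, hI'ind⟩ := ih hk' (X \ {x}) hX'
    have hxI' : x ∉ I' := fun h => (hI'X h).2 rfl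
    refine ⟨insert x I', ?_, ?_, ?_⟩
    · rintro y (rfl | hy)
      · exact hxX
      · exact (hI'X hy).1
    · rw [Set.ncard_insert_of_notMem hxI' (Set.toFinite _), hI'card]
    · rw [hI]
      intro i hi
      by_cases hik : i ≤ k + 1
      · have hir : i < (ones w).card := lt_of_le_of_lt hik hk
        have hxnoti : ¬ x < (ones w).orderEmbOfFin rfl ⟨i, hir⟩ := by
          intro hlt
          exact hxnot (lt_of_lt_of_le hlt (((ones w).orderEmbOfFin rfl).monotone
            (show (⟨i, hir⟩ : Fin _) ≤ ⟨k + 1, hk⟩ by simp [Fin.le_def]; omega)))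
        have heq : (insert x I') ∩ flagOfWord w i = I' ∩ flagOfWord w i := by
          rw [flag_eq w i hir]
          ext y
          simp only [Set.mem_inter_iff, Set.mem_insert_iff, Set.mem_setOf_eq]
          constructor
          · rintro ⟨rfl | hy, h2⟩
            · exact absurd h2 hxnoti
            · exact ⟨hy, h2⟩
          · rintro ⟨h1, h2⟩; exact ⟨Or.inr h1, h2⟩
        rw [heq]
        exact (hI I').mp hI'ind i hi
      · calc ((insert x I') ∩ flagOfWord w i).ncard
            ≤ (insert x I').ncard := Set.ncard_inter_le_ncard_left _ _
          _ = k + 2 := by rw [Set.ncard_insert_of_notMem hxI' (Set.toFinite _), hI'card]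
          _ ≤ i := by omega

/-- The maximal value `N_k` is an isomorphism invariant characterized by the flag sizes. -/
lemma Q_iff {n : ℕ} (w : Fin n → Bool) (M : Matroid (Fin n))
    (hI : ∀ I : Set (Fin n),
      M.Indep I ↔ ∀ i ≤ (ones w).card, (I ∩ flagOfWord w i).ncard ≤ i)
    (k m : ℕ) :
    (∃ X : Set (Fin n), m ≤ X.ncard ∧ ∀ I ⊆ X, M.Indep I → I.ncard ≤ k) ↔
      m ≤ (if h : k < (ones w).card
        then (((ones w).orderEmbOfFin rfl ⟨k, h⟩ : Fin n) : ℕ) else n) := by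
  constructor
  · rintro ⟨X, hm, hX⟩
    split_ifs with h
    · by_contra hcon
      push_neg at hcon
      have hlt : (((ones w).orderEmbOfFin rfl ⟨k, h⟩ : Fin n) : ℕ) < X.ncard := by omega
      obtain ⟨I, hIX, hcard, hind⟩ := exists_indep_subset w M hI k h X hlt
      have := hX I hIX hind
      omega
    · have hn : X.ncard ≤ n := by
        have := Set.ncard_le_ncard (Set.subset_univ X) (Set.toFinite _)
        rwa [Set.ncard_univ, Nat.card_eq_fintype_card, Fintype.card_fin] at this
      omega
  · intro hm
    split_ifs at hm with h
    · refine ⟨{s : Fin n | s < (ones w).orderEmbOfFin rfl ⟨k, h⟩},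
        by rw [ncard_lt_set]; exact hm, ?_⟩
      intro I hIX hind
      have h2 := (hI I).mp hind k (le_of_lt h)
      rwa [flag_eq w k h, Set.inter_eq_self_of_subset_left hIX] at h2
    · push_neg at h
      refine ⟨Set.univ,
        by rw [Set.ncard_univ, Nat.card_eq_fintype_card, Fintype.card_fin]; exact hm, ?_⟩
      intro I _ hind
      have h2 := (hI I).mp hind (ones w).card le_rfl
      have hfl : flagOfWord w (ones w).card = Set.univ := by simp [flagOfWord]
      rw [hfl, Set.inter_univ] at h2
      omega

/-- If `v` and `w` are distinct 0-1 words of length `n`, then the freedom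
matroids `M_v` and `M_w` are not isomorphic; consequently there are exactly `2^n`
pairwise nonisomorphic freedom matroids on an `n`-element set, one for each of the
`2^n` words.  Here `Mfam w` denotes the freedom matroid `M_w` on `Fin n`, and an
isomorphism is a permutation of the ground set carrying independent sets to
independent sets. -/
theorem freedom_matroids_pairwise_nonisomorphic {n : ℕ}
    (Mfam : (Fin n → Bool) → Matroid (Fin n))
    (hE : ∀ w, (Mfam w).E = Set.univ)
    (hInd : ∀ w, ∀ I : Set (Fin n),
      (Mfam w).Indep I ↔ ∀ i ≤ (ones w).card, (I ∩ flagOfWord w i).ncard ≤ i) :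
    (∀ v w : Fin n → Bool, v ≠ w →
      ¬ ∃ f : Equiv.Perm (Fin n),
        ∀ I : Set (Fin n), (Mfam v).Indep I ↔ (Mfam w).Indep (⇑f '' I)) ∧
    Fintype.card (Fin n → Bool) = 2 ^ n := by
  constructor
  · rintro v w hvw ⟨f, hf⟩
    -- one-directional transfer of the invariant, for an arbitrary pair with an iso
    have trans : ∀ (u u' : Fin n → Bool) (g : Equiv.Perm (Fin n)),
        (∀ I : Set (Fin n), (Mfam u).Indep I ↔ (Mfam u').Indep (⇑g '' I)) →
        ∀ k : ℕ,
          (if h : k < (ones u).card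
            then (((ones u).orderEmbOfFin rfl ⟨k, h⟩ : Fin n) : ℕ) else n) ≤
          (if h : k < (ones u').card
            then (((ones u').orderEmbOfFin rfl ⟨k, h⟩ : Fin n) : ℕ) else n) := by
      intro u u' g hg k
      set m := (if h : k < (ones u).card
        then (((ones u).orderEmbOfFin rfl ⟨k, h⟩ : Fin n) : ℕ) else n) with hm
      obtain ⟨X, hXm, hX⟩ := (Q_iff u (Mfam u) (hInd u) k m).mpr le_rfl
      refine (Q_iff u' (Mfam u') (hInd u') k m).mp ⟨⇑g '' X, ?_, ?_⟩
      · rwa [Set.ncard_image_of_injective X g.injective]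
      · intro I hIX hind
        have hJX : ⇑g.symm '' I ⊆ X := by
          rintro y ⟨i, hiI, rfl⟩
          obtain ⟨x, hxX, hx⟩ := hIX hiI
          rwa [← hx, Equiv.symm_apply_apply]
        have himg : ⇑g '' (⇑g.symm '' I) = I := by
          ext y; simp
        have hJind : (Mfam u).Indep (⇑g.symm '' I) := (hg _).mpr (by rwa [himg])
        have := hX _ hJX hJind
        rwa [Set.ncard_image_of_injective I g.symm.injective] at this
    have hfsymm : ∀ I : Set (Fin n), (Mfam w).Indep I ↔ (Mfam v).Indep (⇑f.symm '' I) := by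
      intro I
      have := hf (⇑f.symm '' I)
      rw [show ⇑f '' (⇑f.symm '' I) = I from by ext y; simp] at this
      exact this.symm
    have key : ∀ k : ℕ,
        (if h : k < (ones v).card
          then (((ones v).orderEmbOfFin rfl ⟨k, h⟩ : Fin n) : ℕ) else n) =
        (if h : k < (ones w).card
          then (((ones w).orderEmbOfFin rfl ⟨k, h⟩ : Fin n) : ℕ) else n) :=
      fun k => le_antisymm (trans v w f hf k) (trans w v f.symm hfsymm k)
    -- the number of ones agrees
    have hcard : (ones v).card = (ones w).card := by
      rcases lt_trichotomy (ones v).card (ones w).card with hlt | heq | hgt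
      · have := key (ones v).card
        rw [dif_neg (lt_irrefl _), dif_pos hlt] at this
        exact absurd this.symm (Nat.ne_of_lt (Fin.is_lt _))
      · exact heq
      · have := key (ones w).card
        rw [dif_pos hgt, dif_neg (lt_irrefl _)] at this
        exact absurd this (Nat.ne_of_lt (Fin.is_lt _))
    -- the positions of the ones agree
    have hpi : ∀ k (hk : k < (ones v).card) (hk' : k < (ones w).card),
        (ones v).orderEmbOfFin rfl ⟨k, hk⟩ = (ones w).orderEmbOfFin rfl ⟨k, hk'⟩ := by
      intro k hk hk'
      have := key k
      rw [dif_pos hk, dif_pos hk'] at this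
      exact Fin.ext this
    have hones : ones v = ones w := by
      ext a
      rw [← Finset.mem_coe, ← Finset.range_orderEmbOfFin (ones v) rfl,
        ← Finset.mem_coe (s := ones w), ← Finset.range_orderEmbOfFin (ones w) rfl]
      constructor
      · rintro ⟨j, rfl⟩
        refine ⟨⟨j.1, by omega⟩, ?_⟩
        rw [← hpi j.1 j.2 (by omega)]
      · rintro ⟨j, rfl⟩
        refine ⟨⟨j.1, by omega⟩, ?_⟩
        rw [hpi j.1 (by omega) j.2]
    apply hvw
    funext i
    have hmem := Finset.ext_iff.mp hones i
    simp only [ones, Finset.mem_filter, Finset.mem_univ, true_and] at hmem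
    cases hv : v i <;> cases hw : w i <;> simp_all
  · simp
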